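/- Let K be a field complete with respect to a non-archimedean absolute value, X an r-dimensional variety over K, and φ: X → A^r_K a morphism that is étale at a K-rational point p and maps p to a K-rational point. Then the induced map φ_K: X(K) → K^r restricts to a homeomorphism from a strong-topology neighbourhood of p onto a neighbourhood of φ(p). -/

import Mathlib

open MvPolynomial
open ContinuousLinearMap

theorem hasStrictFDerivAt_mveval {K : Type} [NontriviallyNormedField K] {ι : Type}
    [Fintype ι] [DecidableEq ι] (g : MvPolynomial ι K) (a : ι → K) :
    HasStrictFDerivAt (fun x : ι → K => eval x g)
      (∑ i, eval a (pderiv i g) • (ContinuousLinearMap.proj i : (ι → K) →L[K] K)) a := by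
  induction g using MvPolynomial.induction_on with
  | C c =>
      have h0 : (∑ i, eval a (pderiv i (C c : MvPolynomial ι K)) •
          (proj i : (ι → K) →L[K] K)) = 0 := by ext v; simp
      rw [h0]
      exact (hasStrictFDerivAt_const c a).congr_of_eventuallyEq
        (Filter.Eventually.of_forall fun x => by simp)
  | add p q hp hq =>
      have he : (∑ i, eval a (pderiv i (p+q)) • (proj i : (ι → K) →L[K] K))
          = (∑ i, eval a (pderiv i p) • (proj i : (ι → K) →L[K] K))
            + ∑ i, eval a (pderiv i q) • (proj i : (ι → K) →L[K] K) := by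
        ext v
        simp [Finset.sum_add_distrib, add_mul]
      rw [he]
      exact (hp.add hq).congr_of_eventuallyEq
        (Filter.Eventually.of_forall fun x => by simp)
  | mul_X p i hp =>
      have h := hp.mul (hasStrictFDerivAt_apply i a)
      have h' : HasStrictFDerivAt (fun x : ι → K => eval x (p * X i))
          (eval a p • (proj i : (ι → K) →L[K] K)
            + a i • ∑ j, eval a (pderiv j p) • (proj j : (ι → K) →L[K] K)) a :=
        h.congr_of_eventuallyEq (Filter.Eventually.of_forall fun x => by simp)
      refine h'.congr_fderiv ?_
      ext v
      simp only [ContinuousLinearMap.sum_apply, ContinuousLinearMap.smul_apply,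
        ContinuousLinearMap.proj_apply, ContinuousLinearMap.add_apply,
        pderiv_mul, pderiv_X, map_add, eval_mul, eval_X, smul_eq_mul,
        Pi.single_apply, apply_ite (eval a), map_one, map_zero, mul_ite, mul_one, mul_zero]
      have hs : ∀ x : ι, (eval a (pderiv x p) * a i + if i = x then eval a p else 0) * v x
          = (if i = x then eval a p * v x else 0) + a i * (eval a (pderiv x p) * v x) := by
        intro x; split_ifs <;> ring
      rw [Finset.sum_congr rfl fun x _ => hs x, Finset.sum_add_distrib,
        Finset.sum_ite_eq Finset.univ i, ← Finset.mul_sum]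
      simp

theorem stmt13_aux (K : Type) [NontriviallyNormedField K] [CompleteSpace K]
    (r n : ℕ) (f : Fin n → MvPolynomial (Fin r ⊕ Fin n) K)
    (p₀ : (Fin r → K) × (Fin n → K))
    (hp₀ : ∀ l, eval (Sum.elim p₀.1 p₀.2) (f l) = 0)
    (hetale : eval (Sum.elim p₀.1 p₀.2)
      (Matrix.det (Matrix.of fun i j => pderiv (Sum.inr j) (f i))) ≠ 0) :
    ∃ (U : Set {p : (Fin r → K) × (Fin n → K) //
        ∀ l, eval (Sum.elim p.1 p.2) (f l) = 0})
      (V : Set (Fin r → K)) (e : U ≃ₜ V),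
      IsOpen U ∧ IsOpen V ∧ (⟨p₀, hp₀⟩ : {p : (Fin r → K) × (Fin n → K) //
        ∀ l, eval (Sum.elim p.1 p.2) (f l) = 0}) ∈ U ∧ p₀.1 ∈ V ∧
      ∀ x : U, (e x : Fin r → K) = x.1.1.1 := by
  classical
  set a : Fin r ⊕ Fin n → K := Sum.elim p₀.1 p₀.2 with ha
  -- the continuous linear map (y,x) ↦ Sum.elim y x
  set S : ((Fin r → K) × (Fin n → K)) →L[K] (Fin r ⊕ Fin n → K) :=
    LinearMap.toContinuousLinearMap
      ((LinearEquiv.sumArrowLequivProdArrow (Fin r) (Fin n) K K).symm.toLinearMap) with hSdef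
  have hS : ∀ p : (Fin r → K) × (Fin n → K), S p = Sum.elim p.1 p.2 := by
    intro p; ext v; cases v <;> rfl
  -- derivative of each component
  set Dl : Fin n → (((Fin r → K) × (Fin n → K)) →L[K] K) := fun l =>
    (∑ v, eval a (pderiv v (f l)) • (proj v : ((Fin r ⊕ Fin n) → K) →L[K] K)).comp S with hDldef
  have hDl : ∀ l, HasStrictFDerivAt
      (fun p : (Fin r → K) × (Fin n → K) => eval (Sum.elim p.1 p.2) (f l)) (Dl l) p₀ := by
    intro l
    have hcomp := (hasStrictFDerivAt_mveval (f l) (S p₀)).comp p₀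
      (S.hasStrictFDerivAt (x := p₀))
    rw [hS p₀, ← ha] at hcomp
    exact hcomp.congr_of_eventuallyEq
      (Filter.Eventually.of_forall fun p => by simp [Function.comp, hS])
  set Dg : ((Fin r → K) × (Fin n → K)) →L[K] (Fin n → K) :=
    ContinuousLinearMap.pi Dl with hDgdef
  have hg : HasStrictFDerivAt
      (fun p : (Fin r → K) × (Fin n → K) => fun l => eval (Sum.elim p.1 p.2) (f l)) Dg p₀ := by
    apply hasStrictFDerivAt_pi''
    intro l
    rw [hDgdef, ContinuousLinearMap.proj_pi]
    exact hDl l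
  set Fm : ((Fin r → K) × (Fin n → K)) → ((Fin r → K) × (Fin n → K)) :=
    fun p => (p.1, fun l => eval (Sum.elim p.1 p.2) (f l)) with hFm
  set DF : ((Fin r → K) × (Fin n → K)) →L[K] ((Fin r → K) × (Fin n → K)) :=
    (ContinuousLinearMap.fst K (Fin r → K) (Fin n → K)).prod Dg with hDF
  have hF : HasStrictFDerivAt Fm DF p₀ := HasStrictFDerivAt.prodMk hasStrictFDerivAt_fst hg
  -- the Jacobian in the x-variables
  set J : Matrix (Fin n) (Fin n) K :=
    Matrix.of (fun l j => eval a (pderiv (Sum.inr j) (f l))) with hJdef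
  have hJdet : IsUnit J.det := by
    rw [RingHom.map_det] at hetale
    refine isUnit_iff_ne_zero.mpr ?_
    convert hetale using 2
    rfl
  -- injectivity of DF
  have hker : ∀ z : (Fin r → K) × (Fin n → K), DF z = 0 → z = 0 := by
    rintro ⟨y, x⟩ hz
    rw [Prod.ext_iff] at hz
    obtain ⟨hy, hx⟩ := hz
    have hy' : y = 0 := hy
    have hxl : J.mulVec x = 0 := by
      funext l
      have h1 : Dl l (y, x) = 0 := congrFun hx l
      rw [hDldef] at h1
      simp only [ContinuousLinearMap.comp_apply, ContinuousLinearMap.sum_apply,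
        ContinuousLinearMap.smul_apply, ContinuousLinearMap.proj_apply, smul_eq_mul,
        hS] at h1
      rw [Fintype.sum_sum_type] at h1
      simp only [Sum.elim_inl, Sum.elim_inr, hy', Pi.zero_apply, mul_zero,
        Finset.sum_const_zero, zero_add] at h1
      simpa [hJdef, Matrix.mulVec, dotProduct] using h1
    have hx' : x = 0 := by
      have h2 := congrArg (fun w => J⁻¹.mulVec w) hxl
      simpa [Matrix.mulVec_mulVec, Matrix.nonsing_inv_mul J hJdet,
        Matrix.one_mulVec, Matrix.mulVec_zero] using h2
    simp [hy', hx', Prod.ext_iff]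
  have hbij : Function.Bijective (DF : ((Fin r → K) × (Fin n → K)) →ₗ[K]
      ((Fin r → K) × (Fin n → K))) := by
    have hinj : Function.Injective (DF : ((Fin r → K) × (Fin n → K)) →ₗ[K]
        ((Fin r → K) × (Fin n → K))) :=
      (injective_iff_map_eq_zero _).mpr hker
    exact ⟨hinj, LinearMap.injective_iff_surjective.mp hinj⟩
  let eDF : ((Fin r → K) × (Fin n → K)) ≃L[K] ((Fin r → K) × (Fin n → K)) :=
    (LinearEquiv.ofBijective _ hbij).toContinuousLinearEquiv
  have hcoe : (eDF : ((Fin r → K) × (Fin n → K)) →L[K] ((Fin r → K) × (Fin n → K))) = DF :=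
    ContinuousLinearMap.ext fun z => rfl
  have hF' : HasStrictFDerivAt Fm
      (eDF : ((Fin r → K) × (Fin n → K)) →L[K] ((Fin r → K) × (Fin n → K))) p₀ := by
    rw [hcoe]; exact hF
  set Φ := HasStrictFDerivAt.toOpenPartialHomeomorph Fm hF' with hΦ
  have hΦcoe : ∀ q : (Fin r → K) × (Fin n → K), Φ q = Fm q := fun q => rfl
  have hmem : p₀ ∈ Φ.source := HasStrictFDerivAt.mem_toOpenPartialHomeomorph_source hF'
  -- the subtype
  set X := {p : (Fin r → K) × (Fin n → K) // ∀ l, eval (Sum.elim p.1 p.2) (f l) = 0} with hX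
  have hFzero : ∀ p : X, Fm (p : (Fin r → K) × (Fin n → K))
      = ((p : (Fin r → K) × (Fin n → K)).1, (0 : Fin n → K)) := by
    intro p
    have h2 : (fun l => eval (Sum.elim (p : (Fin r → K) × (Fin n → K)).1
        (p : (Fin r → K) × (Fin n → K)).2) (f l)) = (0 : Fin n → K) :=
      funext fun l => p.2 l
    show ((p : (Fin r → K) × (Fin n → K)).1, (fun l => eval (Sum.elim
        (p : (Fin r → K) × (Fin n → K)).1 (p : (Fin r → K) × (Fin n → K)).2) (f l))) = _
    rw [h2]
  refine ⟨{p : X | (p : (Fin r → K) × (Fin n → K)) ∈ Φ.source},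
    {y : Fin r → K | (y, (0 : Fin n → K)) ∈ Φ.target}, ?_, ?_, ?_, ?_, ?_, ?_⟩
  · -- the homeomorphism
    refine Homeomorph.mk (Equiv.mk ?_ ?_ ?_ ?_) ?_ ?_
    · -- toFun
      refine fun p => ⟨(p : X).1.1, ?_⟩
      have h1 : ((p : X).1.1, (0 : Fin n → K)) = Φ (p : X).1 := by
        rw [hΦcoe, hFzero]
      rw [Set.mem_setOf_eq, h1]
      exact Φ.map_source p.2
    · -- invFun
      refine fun y => ⟨⟨Φ.symm ((y : Fin r → K), 0), ?_⟩, ?_⟩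
      · intro l
        have h2 := congrArg Prod.snd (Φ.right_inv y.2)
        rw [hΦcoe, hFm] at h2
        exact congrFun h2 l
      · exact Φ.map_target y.2
    · -- left_inv
      intro p
      refine Subtype.ext (Subtype.ext ?_)
      have h1 : ((p : X).1.1, (0 : Fin n → K)) = Φ (p : X).1 := by
        rw [hΦcoe, hFzero]
      show Φ.symm ((p : X).1.1, 0) = (p : X).1
      rw [h1]
      exact Φ.left_inv p.2
    · -- right_inv
      intro y
      refine Subtype.ext ?_
      have h2 := congrArg Prod.fst (Φ.right_inv y.2)
      rw [hΦcoe, hFm] at h2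
      exact h2
    · -- continuity of toFun
      exact Continuous.subtype_mk
        (continuous_fst.comp (continuous_subtype_val.comp continuous_subtype_val)) _
    · -- continuity of invFun
      refine Continuous.subtype_mk (Continuous.subtype_mk ?_ _) _
      exact Φ.continuousOn_symm.comp_continuous
        (continuous_subtype_val.prodMk continuous_const) (fun y => y.2)
  · exact Φ.open_source.preimage continuous_subtype_val
  · exact Φ.open_target.preimage (continuous_id.prodMk continuous_const)
  · exact hmem
  · show (p₀.1, (0 : Fin n → K)) ∈ Φ.target
    have h1 : (p₀.1, (0 : Fin n → K)) = Φ p₀ := by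
      rw [hΦcoe]
      exact (hFzero ⟨p₀, hp₀⟩).symm
    rw [h1]
    exact Φ.map_source hmem
  · intro x
    rfl


/-- Non-archimedean implicit function theorem: let `K` be complete with respect to a
non-archimedean absolute value, and let `X(K)` be given locally near a rational point `p₀`
as the zero locus in `K^r × K^n` of polynomials `f₁,…,fₙ` with `det(∂f/∂X)(p₀) ≠ 0`
(i.e. the projection `φ` to `𝔸^r` is étale at `p₀`).  Then `φ_K` restricts to a
homeomorphism from a strong neighbourhood of `p₀` in `X(K)` onto a neighbourhood of
`φ(p₀)` in `K^r`. -/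
theorem stmt13 (K : Type) [NormedField K] [CompleteSpace K]
    (hna : ∀ x y : K, ‖x + y‖ ≤ max ‖x‖ ‖y‖)
    (r n : ℕ) (f : Fin n → MvPolynomial (Fin r ⊕ Fin n) K)
    (p₀ : (Fin r → K) × (Fin n → K))
    (hp₀ : ∀ l, eval (Sum.elim p₀.1 p₀.2) (f l) = 0)
    (hetale : eval (Sum.elim p₀.1 p₀.2)
      (Matrix.det (Matrix.of fun i j => pderiv (Sum.inr j) (f i))) ≠ 0) :
    ∃ (U : Set {p : (Fin r → K) × (Fin n → K) //
        ∀ l, eval (Sum.elim p.1 p.2) (f l) = 0})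
      (V : Set (Fin r → K)) (e : U ≃ₜ V),
      IsOpen U ∧ IsOpen V ∧ (⟨p₀, hp₀⟩ : {p : (Fin r → K) × (Fin n → K) //
        ∀ l, eval (Sum.elim p.1 p.2) (f l) = 0}) ∈ U ∧ p₀.1 ∈ V ∧
      ∀ x : U, (e x : Fin r → K) = x.1.1.1 := by
  rcases NormedField.discreteTopology_or_nontriviallyNormedField K with hd | ⟨⟨h', rfl⟩⟩
  · -- discrete case
    haveI : DiscreteTopology ((Fin r → K) × (Fin n → K)) := by infer_instance
    haveI : DiscreteTopology {p : (Fin r → K) × (Fin n → K) //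
        ∀ l, eval (Sum.elim p.1 p.2) (f l) = 0} := by infer_instance
    haveI : DiscreteTopology (Fin r → K) := by infer_instance
    refine ⟨{⟨p₀, hp₀⟩}, {p₀.1}, ?_, isOpen_discrete _, isOpen_discrete _, rfl, rfl, ?_⟩
    · refine Homeomorph.mk (Equiv.mk (fun _ => ⟨p₀.1, rfl⟩) (fun _ => ⟨⟨p₀, hp₀⟩, rfl⟩)
        ?_ ?_) ?_ ?_
      · intro x; exact Subtype.ext x.2.symm
      · intro y; exact Subtype.ext y.2.symm
      · exact continuous_of_discreteTopology
      · exact continuous_of_discreteTopology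
    · intro x
      have hx := x.2
      simp only [Set.mem_singleton_iff] at hx
      rw [hx]
      rfl
  · letI := h'
    exact stmt13_aux K r n f p₀ hp₀ hetale
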